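/- Let {A, B, C, D} be complex arrays of size m_1×⋯×m_r satisfying R_A + R_B + R_C + R_D = W_1·Δ, where W_1 = w(A)+w(B)+w(C)+w(D), and let {E, F, G, H} be complex arrays of size n_1×⋯×n_r satisfying R_E + R_F + R_G + R_H = W_2·Δ, where W_2 = w(E)+w(F)+w(G)+w(H). Define arrays of size m_1n_1×⋯×m_rn_r by P = A⊗F* − B*⊗E + C⊗G + D⊗H, Q = A*⊗E + B⊗F* − C⊗H* + D⊗G*, R = C*⊗E − D⊗F + A⊗H* + B⊗G, and S = −C⊗F − D*⊗E + A⊗G* − B⊗H. Then R_P + R_Q + R_R + R_S = W_1·W_2·Δ. -/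

import Mathlib

open scoped BigOperators

/-- An `r`-dimensional complex array, as a complex-valued function on ℤ^r. -/
abbrev Arr (r : ℕ) := (Fin r → ℤ) → ℂ

/-- Index tuple `i` lies in the box `[0, s₁) × ⋯ × [0, s_r)`. -/
def InBox {r : ℕ} (s : Fin r → ℕ) (i : Fin r → ℤ) : Prop :=
  ∀ k, 0 ≤ i k ∧ i k < (s k : ℤ)

/-- The array vanishes outside the box of size `s`. -/
def SupportedOn {r : ℕ} (s : Fin r → ℕ) (A : Arr r) : Prop :=
  ∀ i, ¬ InBox s i → A i = 0

/-- Aperiodic autocorrelation of an array. -/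
noncomputable def autocorr {r : ℕ} (A : Arr r) (δ : Fin r → ℤ) : ℂ :=
  ∑ᶠ i : Fin r → ℤ, A i * (starRingEnd ℂ) (A (i - δ))

/-- Weight of an array: the sum of squared moduli of its entries. -/
noncomputable def weight {r : ℕ} (A : Arr r) : ℝ :=
  ∑ᶠ i : Fin r → ℤ, ‖A i‖ ^ 2

/-- Flipped-and-conjugated array `A*`, relative to size `s`. -/
noncomputable def flipConj {r : ℕ} (s : Fin r → ℕ) (A : Arr r) : Arr r :=
  fun i => (starRingEnd ℂ) (A fun k => (s k : ℤ) - 1 - i k)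

/-- Kronecker product of arrays, where `t` is the size of `B`:
`(A ⊗ B)[i·t + j] = A[i]·B[j]`. -/
noncomputable def kron {r : ℕ} (t : Fin r → ℕ) (A B : Arr r) : Arr r :=
  fun i => A (fun k => i k / (t k : ℤ)) * B (fun k => i k % (t k : ℤ))

/-- Concatenation of `X` (of extent `u` in dimension `i0`) and `Y` in dimension `i0`. -/
noncomputable def concat {r : ℕ} (i0 : Fin r) (u : ℕ) (X Y : Arr r) : Arr r :=
  fun v => if v i0 < (u : ℤ) then X v else Y (Function.update v i0 (v i0 - u))

/-- A polyphase array of size `s`: supported on the box and all in-box entries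
are `N`-th roots of unity for some `N`. -/
def IsPolyphase {r : ℕ} (s : Fin r → ℕ) (A : Arr r) : Prop :=
  SupportedOn s A ∧ ∃ N : ℕ, 0 < N ∧ ∀ i, InBox s i → A i ^ N = 1

/-- A binary array of size `s`: all in-box entries are ±1, zero outside. -/
def IsBinary {r : ℕ} (s : Fin r → ℕ) (A : Arr r) : Prop :=
  SupportedOn s A ∧ ∀ i, InBox s i → A i = 1 ∨ A i = -1

/-- Entries are zero or of modulus one, supported on the box of size `s`. -/
def IsUnimodZero {r : ℕ} (s : Fin r → ℕ) (A : Arr r) : Prop :=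
  SupportedOn s A ∧ ∀ i, InBox s i → A i = 0 ∨ ‖A i‖ = 1

/-- Golay complementarity of a pair: `R_A + R_B = (w(A)+w(B))·Δ`. -/
def ComplementaryPair {r : ℕ} (A B : Arr r) : Prop :=
  ∀ δ : Fin r → ℤ, autocorr A δ + autocorr B δ =
    if δ = 0 then ((weight A + weight B : ℝ) : ℂ) else 0

/-- Golay complementarity of a quad: `R_A + R_B + R_C + R_D = (Σ w)·Δ`. -/
def ComplementaryQuad {r : ℕ} (A B C D : Arr r) : Prop :=
  ∀ δ : Fin r → ℤ, autocorr A δ + autocorr B δ + autocorr C δ + autocorr D δ =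
    if δ = 0 then ((weight A + weight B + weight C + weight D : ℝ) : ℂ) else 0

namespace Stmt15
variable {r : ℕ}
noncomputable def cc (X Y : Arr r) (δ : Fin r → ℤ) : ℂ :=
  ∑ᶠ i : Fin r → ℤ, X i * (starRingEnd ℂ) (Y (i - δ))
lemma autocorr_eq_cc (A : Arr r) (δ : Fin r → ℤ) : autocorr A δ = cc A A δ := rfl

lemma finsum_reflect (c : Fin r → ℤ) (f : (Fin r → ℤ) → ℂ) :
    ∑ᶠ i, f (c - i) = ∑ᶠ i, f i :=
  finsum_comp_equiv (Equiv.subLeft c)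

lemma cc_flip_flip (s : Fin r → ℕ) (X Y : Arr r) (ρ : Fin r → ℤ) :
    cc (flipConj s X) (flipConj s Y) ρ = cc Y X ρ := by
  unfold cc flipConj
  rw [← finsum_reflect (fun k => (s k : ℤ) - 1 + ρ k)
    (fun i => Y i * (starRingEnd ℂ) (X (i - ρ)))]
  apply finsum_congr
  intro i
  have e1 : ((fun k => (s k : ℤ) - 1 + ρ k) - i) = fun k => (s k : ℤ) - 1 - (i k - ρ k) := by
    funext k; simp [Pi.sub_apply]; ring
  have e2 : ((fun k => (s k : ℤ) - 1 - (i k - ρ k)) - ρ) = fun k => (s k : ℤ) - 1 - i k := by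
    funext k; simp [Pi.sub_apply]; ring
  rw [e1, e2]
  have e3 : (fun k => (s k : ℤ) - 1 - (i - ρ) k) = fun k => (s k : ℤ) - 1 - (i k - ρ k) := rfl
  rw [e3]
  simp only [Complex.conj_conj]
  ring

lemma cc_flip_left (s : Fin r → ℕ) (X Y : Arr r) (ρ : Fin r → ℤ) :
    cc (flipConj s X) Y ρ = cc (flipConj s Y) X ρ := by
  unfold cc flipConj
  rw [← finsum_reflect (fun k => (s k : ℤ) - 1 + ρ k)
    (fun i => (starRingEnd ℂ) (Y fun k => (s k : ℤ) - 1 - i k) * (starRingEnd ℂ) (X (i - ρ)))]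
  apply finsum_congr
  intro i
  have e1 : (fun k => (s k : ℤ) - 1 - ((fun k => (s k : ℤ) - 1 + ρ k) - i) k)
      = fun k => i k - ρ k := by funext k; simp [Pi.sub_apply]; ring
  have e2 : (((fun k => (s k : ℤ) - 1 + ρ k) - i) - ρ) = fun k => (s k : ℤ) - 1 - i k := by
    funext k; simp [Pi.sub_apply]; ring
  rw [e1, e2]
  have e3 : (i - ρ) = fun k => i k - ρ k := rfl
  rw [e3]
  ring

lemma cc_flip_right (s : Fin r → ℕ) (X Y : Arr r) (ρ : Fin r → ℤ) :
    cc X (flipConj s Y) ρ = cc Y (flipConj s X) ρ := by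
  unfold cc flipConj
  rw [← finsum_reflect (fun k => (s k : ℤ) - 1 + ρ k)
    (fun i => Y i * (starRingEnd ℂ) ((starRingEnd ℂ) (X fun k => (s k : ℤ) - 1 - (i - ρ) k)))]
  apply finsum_congr
  intro i
  have e1 : (fun k => (s k : ℤ) - 1 - (((fun k => (s k : ℤ) - 1 + ρ k) - i) - ρ) k)
      = i := by funext k; simp [Pi.sub_apply]; ring
  rw [e1]
  have e2 : (fun k => (s k : ℤ) - 1 - (i - ρ) k) = ((fun k => (s k : ℤ) - 1 + ρ k) - i) := by
    funext k; simp [Pi.sub_apply]; ring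
  rw [e2]
  simp only [Complex.conj_conj]
  ring
noncomputable def boxF (s : Fin r → ℕ) : Finset (Fin r → ℤ) :=
  Fintype.piFinset fun k => Finset.Ico (0:ℤ) (s k)
lemma mem_boxF {s : Fin r → ℕ} {i : Fin r → ℤ} : i ∈ boxF s ↔ InBox s i := by
  simp [boxF, Fintype.mem_piFinset, Finset.mem_Ico, InBox]
lemma suppOn_boxF {s : Fin r → ℕ} {X : Arr r} (h : SupportedOn s X) :
    ∀ i ∉ boxF s, X i = 0 := fun i hi => h i (fun hib => hi (mem_boxF.2 hib))
lemma cc_eq_sum {B : Finset (Fin r → ℤ)} {X : Arr r}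
    (hX : ∀ i ∉ B, X i = 0) (Y : Arr r) (δ : Fin r → ℤ) :
    cc X Y δ = ∑ i ∈ B, X i * (starRingEnd ℂ) (Y (i - δ)) := by
  apply finsum_eq_sum_of_support_subset
  intro i hi
  by_contra hiB
  exact hi (by simp [hX i hiB])

noncomputable def diffF (m : Fin r → ℕ) : Finset (Fin r → ℤ) :=
  Fintype.piFinset fun k => Finset.Ioo (-(m k : ℤ)) (m k)

lemma mem_diffF {m : Fin r → ℕ} {ρ : Fin r → ℤ} :
    ρ ∈ diffF m ↔ ∀ k, -(m k : ℤ) < ρ k ∧ ρ k < m k := by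
  simp [diffF, Fintype.mem_piFinset, Finset.mem_Ioo]

lemma kron_supported {m n : Fin r → ℕ} (hn : ∀ k, 0 < n k) {X Y : Arr r}
    (hX : SupportedOn m X) (hY : SupportedOn n Y) :
    ∀ i ∉ boxF (fun k => m k * n k), kron n X Y i = 0 := by
  intro i hi
  by_cases h1 : InBox m (fun k => i k / (n k : ℤ))
  · by_cases h2 : InBox n (fun k => i k % (n k : ℤ))
    · exfalso
      apply hi
      rw [mem_boxF]
      intro k
      have ha := h1 k
      have hb := h2 k
      have hd := Int.mul_ediv_add_emod (i k) (n k)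
      have hnk : (0:ℤ) < n k := by exact_mod_cast hn k
      simp only at ha hb
      push_cast
      constructor
      · nlinarith [ha.1, hb.1, mul_nonneg (le_of_lt hnk) ha.1]
      · nlinarith [mul_le_mul_of_nonneg_left (show i k / (n k:ℤ) ≤ (m k:ℤ) - 1 by omega)
          (le_of_lt hnk), hb.2]
    · show X _ * Y _ = 0
      rw [hY _ h2, mul_zero]
  · show X _ * Y _ = 0
    rw [hX _ h1, zero_mul]

lemma innerB {m n : Fin r → ℕ} (hn : ∀ k, 0 < n k) {X' Y' : Arr r}
    (hX' : SupportedOn m X') (hY' : SupportedOn n Y')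
    (δ a b : Fin r → ℤ) (ha : InBox m a) :
    (starRingEnd ℂ) (kron n X' Y' (fun k => (n k : ℤ) * a k + b k - δ k)) =
    ∑ ρ ∈ diffF m, (starRingEnd ℂ) (X' (a - ρ)) *
      (starRingEnd ℂ) (Y' (fun k => b k - δ k + (n k : ℤ) * ρ k)) := by
  set j : Fin r → ℤ := fun k => (n k : ℤ) * a k + b k - δ k with hj
  set ρ0 : Fin r → ℤ := fun k => a k - j k / (n k : ℤ) with hρ0def
  have hnk : ∀ k, (0:ℤ) < n k := fun k => by exact_mod_cast hn k
  have vanish : ∀ ρ : Fin r → ℤ, ρ ≠ ρ0 →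
      (starRingEnd ℂ) (X' (a - ρ)) *
        (starRingEnd ℂ) (Y' (fun k => b k - δ k + (n k : ℤ) * ρ k)) = 0 := by
    intro ρ hne
    have : ∃ k, ρ k ≠ ρ0 k := by
      by_contra hc
      push_neg at hc
      exact hne (funext hc)
    obtain ⟨k, hk⟩ := this
    have hY0 : Y' (fun k => b k - δ k + (n k : ℤ) * ρ k) = 0 := by
      apply hY'
      intro hib
      have hvk := hib k
      simp only at hvk
      have hdm := Int.mul_ediv_add_emod (j k) (n k)
      have hr0 : 0 ≤ j k % (n k : ℤ) := Int.emod_nonneg _ (ne_of_gt (hnk k))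
      have hr1 : j k % (n k : ℤ) < n k := Int.emod_lt_of_pos _ (hnk k)
      have hjk : j k = (n k : ℤ) * a k + b k - δ k := rfl
      have hρ0k : ρ0 k = a k - j k / (n k : ℤ) := rfl
      set q := j k / (n k : ℤ) with hq
      set d := ρ k - ρ0 k with hd
      have hdne : d ≠ 0 := fun h0 => hk (by omega)
      have hv : b k - δ k + (n k : ℤ) * ρ k = j k % (n k:ℤ) + (n k : ℤ) * d := by
        rw [hd, hρ0k]; nlinarith [hdm]
      rcases lt_or_gt_of_ne hdne with hdlt | hdgt
      · have h5 : (n k : ℤ) * d ≤ (n k : ℤ) * (-1) :=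
          mul_le_mul_of_nonneg_left (by omega) (le_of_lt (hnk k))
        omega
      · have h5 : (n k : ℤ) * 1 ≤ (n k : ℤ) * d :=
          mul_le_mul_of_nonneg_left (by omega) (le_of_lt (hnk k))
        omega
    rw [hY0, map_zero, mul_zero]
  by_cases hmem : ρ0 ∈ diffF m
  · rw [Finset.sum_eq_single_of_mem ρ0 hmem (fun ρ _ hne => vanish ρ hne)]
    have e1 : a - ρ0 = fun k => j k / (n k : ℤ) := by
      funext k; simp [hρ0def]
    have e2 : (fun k => b k - δ k + (n k : ℤ) * ρ0 k) = fun k => j k % (n k : ℤ) := by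
      funext k
      have hdm := Int.mul_ediv_add_emod (j k) (n k)
      have : ρ0 k = a k - j k / (n k : ℤ) := rfl
      have hjk : j k = (n k : ℤ) * a k + b k - δ k := rfl
      nlinarith [hdm]
    rw [e1, e2]
    have : kron n X' Y' j = X' (fun k => j k / (n k : ℤ)) * Y' (fun k => j k % (n k : ℤ)) := rfl
    rw [this, map_mul]
  · rw [Finset.sum_eq_zero (fun ρ hρ => vanish ρ (fun h => hmem (h ▸ hρ)))]
    have hX0 : X' (fun k => j k / (n k : ℤ)) = 0 := by
      apply hX'
      intro hib
      apply hmem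
      rw [mem_diffF]
      intro k
      have h1 := hib k
      have h2 := ha k
      have : ρ0 k = a k - j k / (n k : ℤ) := rfl
      simp only at h1
      omega
    show (starRingEnd ℂ) (X' _ * Y' _) = 0
    rw [hX0, zero_mul, map_zero]

lemma key {m n : Fin r → ℕ} (hn : ∀ k, 0 < n k)
    {X Y X' Y' : Arr r} (hX : SupportedOn m X) (hX' : SupportedOn m X')
    (hY : SupportedOn n Y) (hY' : SupportedOn n Y') (δ : Fin r → ℤ) :
    cc (kron n X Y) (kron n X' Y') δ =
      ∑ ρ ∈ diffF m, cc X X' ρ * cc Y Y' (fun k => δ k - (n k : ℤ) * ρ k) := by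
  have hnk : ∀ k, (0:ℤ) < n k := fun k => by exact_mod_cast hn k
  rw [cc_eq_sum (kron_supported hn hX hY) _ δ]
  have step1 : ∑ i ∈ boxF (fun k => m k * n k),
        kron n X Y i * (starRingEnd ℂ) (kron n X' Y' (i - δ))
      = ∑ p ∈ boxF m ×ˢ boxF n, X p.1 * Y p.2 *
          (starRingEnd ℂ) (kron n X' Y' (fun k => (n k : ℤ) * p.1 k + p.2 k - δ k)) := by
    apply Finset.sum_nbij'
      (i := fun i => ((fun k => i k / (n k : ℤ)), (fun k => i k % (n k : ℤ))))
      (j := fun p => (fun k => (n k : ℤ) * p.1 k + p.2 k))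
    · intro i hi
      rw [mem_boxF] at hi
      rw [Finset.mem_product, mem_boxF, mem_boxF]
      constructor
      · intro k
        have h := hi k
        have hdm := Int.mul_ediv_add_emod (i k) (n k)
        have hr0 : 0 ≤ i k % (n k : ℤ) := Int.emod_nonneg _ (ne_of_gt (hnk k))
        have hr1 : i k % (n k : ℤ) < n k := Int.emod_lt_of_pos _ (hnk k)
        push_cast at h
        constructor
        · simp only
          nlinarith [h.1]
        · simp only
          by_contra hc
          push_neg at hc
          have : (n k : ℤ) * (m k : ℤ) ≤ (n k:ℤ) * (i k / (n k:ℤ)) :=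
            mul_le_mul_of_nonneg_left hc (le_of_lt (hnk k))
          nlinarith [h.2]
      · intro k
        exact ⟨Int.emod_nonneg _ (ne_of_gt (hnk k)), Int.emod_lt_of_pos _ (hnk k)⟩
    · intro p hp
      rw [Finset.mem_product, mem_boxF, mem_boxF] at hp
      rw [mem_boxF]
      intro k
      have h1 := hp.1 k
      have h2 := hp.2 k
      push_cast
      constructor
      · nlinarith [mul_nonneg (le_of_lt (hnk k)) h1.1]
      · nlinarith [mul_le_mul_of_nonneg_left (show p.1 k ≤ (m k:ℤ) - 1 by omega)
          (le_of_lt (hnk k))]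
    · intro i _
      funext k
      simp only
      have := Int.mul_ediv_add_emod (i k) (n k)
      omega
    · intro p hp
      rw [Finset.mem_product, mem_boxF, mem_boxF] at hp
      have hq : ∀ k, ((n k:ℤ) * p.1 k + p.2 k) / (n k:ℤ) = p.1 k ∧
          ((n k:ℤ) * p.1 k + p.2 k) % (n k:ℤ) = p.2 k := by
        intro k
        have h2 := hp.2 k
        exact (Int.ediv_emod_unique (hnk k)).2 ⟨by ring, h2.1, h2.2⟩
      refine Prod.ext ?_ ?_
      · funext k; exact (hq k).1
      · funext k; exact (hq k).2
    · intro i hi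
      simp only
      have e1 : (fun k => (n k:ℤ) * (i k / (n k:ℤ)) + i k % (n k:ℤ) - δ k) = i - δ := by
        funext k
        have := Int.mul_ediv_add_emod (i k) (n k)
        simp only [Pi.sub_apply]
        omega
      rw [e1]
      rfl
  rw [step1, Finset.sum_product]
  have step2 : ∀ a ∈ boxF m, ∀ b ∈ boxF n,
      X a * Y b * (starRingEnd ℂ) (kron n X' Y' (fun k => (n k : ℤ) * a k + b k - δ k))
      = ∑ ρ ∈ diffF m, (X a * (starRingEnd ℂ) (X' (a - ρ))) *
          (Y b * (starRingEnd ℂ) (Y' (b - (fun k => δ k - (n k : ℤ) * ρ k)))) := by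
    intro a ha b _
    rw [innerB hn hX' hY' δ a b (mem_boxF.1 ha), Finset.mul_sum]
    apply Finset.sum_congr rfl
    intro ρ _
    have e : b - (fun k => δ k - (n k : ℤ) * ρ k) = fun k => b k - δ k + (n k : ℤ) * ρ k := by
      funext k; simp [Pi.sub_apply]; ring
    rw [e]
    ring
  rw [Finset.sum_congr rfl (fun a ha => Finset.sum_congr rfl (fun b hb => step2 a ha b hb))]
  rw [Finset.sum_congr rfl (fun a _ => Finset.sum_comm), Finset.sum_comm]
  apply Finset.sum_congr rfl
  intro ρ _
  rw [← Finset.sum_mul_sum, ← cc_eq_sum (suppOn_boxF hX) X' ρ,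
    ← cc_eq_sum (suppOn_boxF hY) Y' _]

lemma cc_expand4 (B : Finset (Fin r → ℤ)) (p1 p2 p3 p4 q1 q2 q3 q4 : Arr r)
    (h1 : ∀ i ∉ B, p1 i = 0) (h2 : ∀ i ∉ B, p2 i = 0)
    (h3 : ∀ i ∉ B, p3 i = 0) (h4 : ∀ i ∉ B, p4 i = 0) (δ : Fin r → ℤ) :
    cc (fun v => p1 v + p2 v + p3 v + p4 v) (fun v => q1 v + q2 v + q3 v + q4 v) δ =
      cc p1 q1 δ + cc p1 q2 δ + cc p1 q3 δ + cc p1 q4 δ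
      + cc p2 q1 δ + cc p2 q2 δ + cc p2 q3 δ + cc p2 q4 δ
      + cc p3 q1 δ + cc p3 q2 δ + cc p3 q3 δ + cc p3 q4 δ
      + cc p4 q1 δ + cc p4 q2 δ + cc p4 q3 δ + cc p4 q4 δ := by
  have hsum : ∀ i ∉ B, p1 i + p2 i + p3 i + p4 i = 0 := by
    intro i hi; rw [h1 i hi, h2 i hi, h3 i hi, h4 i hi]; ring
  rw [cc_eq_sum hsum _ δ,
    cc_eq_sum h1 q1 δ, cc_eq_sum h1 q2 δ, cc_eq_sum h1 q3 δ, cc_eq_sum h1 q4 δ,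
    cc_eq_sum h2 q1 δ, cc_eq_sum h2 q2 δ, cc_eq_sum h2 q3 δ, cc_eq_sum h2 q4 δ,
    cc_eq_sum h3 q1 δ, cc_eq_sum h3 q2 δ, cc_eq_sum h3 q3 δ, cc_eq_sum h3 q4 δ,
    cc_eq_sum h4 q1 δ, cc_eq_sum h4 q2 δ, cc_eq_sum h4 q3 δ, cc_eq_sum h4 q4 δ,
    ← Finset.sum_add_distrib, ← Finset.sum_add_distrib, ← Finset.sum_add_distrib,
    ← Finset.sum_add_distrib, ← Finset.sum_add_distrib, ← Finset.sum_add_distrib,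
    ← Finset.sum_add_distrib, ← Finset.sum_add_distrib, ← Finset.sum_add_distrib,
    ← Finset.sum_add_distrib, ← Finset.sum_add_distrib, ← Finset.sum_add_distrib,
    ← Finset.sum_add_distrib, ← Finset.sum_add_distrib, ← Finset.sum_add_distrib]
  apply Finset.sum_congr rfl
  intro i _
  simp only [map_add]
  ring

lemma autocorr_zero' {X : Arr r} (h : ∀ v, X v = 0) (δ : Fin r → ℤ) :
    (∑ᶠ i : Fin r → ℤ, X i * (starRingEnd ℂ) (X (i - δ))) = 0 := by
  have : ∀ i : Fin r → ℤ, X i * (starRingEnd ℂ) (X (i - δ)) = 0 := by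
    intro i; rw [h i, zero_mul]
  rw [finsum_congr this, finsum_zero]

lemma weight_zero' {X : Arr r} (h : ∀ v, X v = 0) :
    (∑ᶠ i : Fin r → ℤ, ‖X i‖ ^ 2) = 0 := by
  have : ∀ i : Fin r → ℤ, ‖X i‖ ^ 2 = 0 := by intro i; rw [h i]; simp
  rw [finsum_congr this, finsum_zero]

lemma supp_empty {s : Fin r → ℕ} {X : Arr r} (hs : ¬ ∀ k, 0 < s k)
    (hX : SupportedOn s X) : ∀ v, X v = 0 := by
  intro v
  apply hX
  intro hib
  apply hs
  intro k
  have h := hib k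
  have : (0:ℤ) < s k := lt_of_le_of_lt h.1 h.2
  exact_mod_cast this

lemma flipConj_suppOn {s : Fin r → ℕ} {X : Arr r} (hX : SupportedOn s X) :
    SupportedOn s (flipConj s X) := by
  intro i hi
  show (starRingEnd ℂ) (X fun k => (s k : ℤ) - 1 - i k) = 0
  rw [hX _ (fun hib => hi (fun k => by have := hib k; simp only at this; omega)), map_zero]

lemma final_sum {m n : Fin r → ℕ} (hm : ∀ k, 0 < m k) (c1 c2 : ℂ) (δ : Fin r → ℤ) :
    ∑ ρ ∈ diffF m, (if ρ = 0 then c1 else 0) *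
      (if (fun k => δ k - (n k : ℤ) * ρ k) = (0 : Fin r → ℤ) then c2 else 0)
    = if δ = 0 then c1 * c2 else 0 := by
  have h0 : (0 : Fin r → ℤ) ∈ diffF m := by
    rw [mem_diffF]
    intro k
    have := hm k
    constructor <;> simp <;> exact_mod_cast this
  rw [Finset.sum_eq_single_of_mem 0 h0]
  · have e : (fun k => δ k - (n k : ℤ) * (0 : Fin r → ℤ) k) = δ := by
      funext k; simp
    rw [if_pos rfl, e]
    split_ifs <;> ring
  · intro ρ _ hne
    rw [if_neg hne, zero_mul]

lemma pat1 (B : Finset (Fin r → ℤ)) (k1 k2 k3 k4 : Arr r)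
    (h1 : ∀ i ∉ B, k1 i = 0) (h2 : ∀ i ∉ B, k2 i = 0)
    (h3 : ∀ i ∉ B, k3 i = 0) (h4 : ∀ i ∉ B, k4 i = 0) (δ : Fin r → ℤ) :
    cc (fun v => k1 v - k2 v + k3 v + k4 v) (fun v => k1 v - k2 v + k3 v + k4 v) δ =
      cc k1 k1 δ
      - cc k1 k2 δ
      + cc k1 k3 δ
      + cc k1 k4 δ
      - cc k2 k1 δ
      + cc k2 k2 δ
      - cc k2 k3 δ
      - cc k2 k4 δ
      + cc k3 k1 δ
      - cc k3 k2 δ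
      + cc k3 k3 δ
      + cc k3 k4 δ
      + cc k4 k1 δ
      - cc k4 k2 δ
      + cc k4 k3 δ
      + cc k4 k4 δ := by
  have hsum : ∀ i ∉ B, k1 i - k2 i + k3 i + k4 i = 0 := by
    intro i hi; rw [h1 i hi, h2 i hi, h3 i hi, h4 i hi]; ring
  rw [cc_eq_sum hsum _ δ, cc_eq_sum h1 k1 δ, cc_eq_sum h1 k2 δ, cc_eq_sum h1 k3 δ, cc_eq_sum h1 k4 δ, cc_eq_sum h2 k1 δ, cc_eq_sum h2 k2 δ, cc_eq_sum h2 k3 δ, cc_eq_sum h2 k4 δ, cc_eq_sum h3 k1 δ, cc_eq_sum h3 k2 δ, cc_eq_sum h3 k3 δ, cc_eq_sum h3 k4 δ, cc_eq_sum h4 k1 δ, cc_eq_sum h4 k2 δ, cc_eq_sum h4 k3 δ, cc_eq_sum h4 k4 δ]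
  rw [Finset.sum_congr rfl (fun i _ => show
      (k1 i - k2 i + k3 i + k4 i) *
        (starRingEnd ℂ) (k1 (i - δ) - k2 (i - δ) + k3 (i - δ) + k4 (i - δ)) =
          k1 i * (starRingEnd ℂ) (k1 (i - δ))
          - k1 i * (starRingEnd ℂ) (k2 (i - δ))
          + k1 i * (starRingEnd ℂ) (k3 (i - δ))
          + k1 i * (starRingEnd ℂ) (k4 (i - δ))
          - k2 i * (starRingEnd ℂ) (k1 (i - δ))
          + k2 i * (starRingEnd ℂ) (k2 (i - δ))
          - k2 i * (starRingEnd ℂ) (k3 (i - δ))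
          - k2 i * (starRingEnd ℂ) (k4 (i - δ))
          + k3 i * (starRingEnd ℂ) (k1 (i - δ))
          - k3 i * (starRingEnd ℂ) (k2 (i - δ))
          + k3 i * (starRingEnd ℂ) (k3 (i - δ))
          + k3 i * (starRingEnd ℂ) (k4 (i - δ))
          + k4 i * (starRingEnd ℂ) (k1 (i - δ))
          - k4 i * (starRingEnd ℂ) (k2 (i - δ))
          + k4 i * (starRingEnd ℂ) (k3 (i - δ))
          + k4 i * (starRingEnd ℂ) (k4 (i - δ))
      from by simp only [map_add, map_sub, map_neg]; ring)]
  simp only [Finset.sum_add_distrib, Finset.sum_sub_distrib]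

lemma pat2 (B : Finset (Fin r → ℤ)) (k1 k2 k3 k4 : Arr r)
    (h1 : ∀ i ∉ B, k1 i = 0) (h2 : ∀ i ∉ B, k2 i = 0)
    (h3 : ∀ i ∉ B, k3 i = 0) (h4 : ∀ i ∉ B, k4 i = 0) (δ : Fin r → ℤ) :
    cc (fun v => k1 v + k2 v - k3 v + k4 v) (fun v => k1 v + k2 v - k3 v + k4 v) δ =
      cc k1 k1 δ
      + cc k1 k2 δ
      - cc k1 k3 δ
      + cc k1 k4 δ
      + cc k2 k1 δ
      + cc k2 k2 δ
      - cc k2 k3 δ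
      + cc k2 k4 δ
      - cc k3 k1 δ
      - cc k3 k2 δ
      + cc k3 k3 δ
      - cc k3 k4 δ
      + cc k4 k1 δ
      + cc k4 k2 δ
      - cc k4 k3 δ
      + cc k4 k4 δ := by
  have hsum : ∀ i ∉ B, k1 i + k2 i - k3 i + k4 i = 0 := by
    intro i hi; rw [h1 i hi, h2 i hi, h3 i hi, h4 i hi]; ring
  rw [cc_eq_sum hsum _ δ, cc_eq_sum h1 k1 δ, cc_eq_sum h1 k2 δ, cc_eq_sum h1 k3 δ, cc_eq_sum h1 k4 δ, cc_eq_sum h2 k1 δ, cc_eq_sum h2 k2 δ, cc_eq_sum h2 k3 δ, cc_eq_sum h2 k4 δ, cc_eq_sum h3 k1 δ, cc_eq_sum h3 k2 δ, cc_eq_sum h3 k3 δ, cc_eq_sum h3 k4 δ, cc_eq_sum h4 k1 δ, cc_eq_sum h4 k2 δ, cc_eq_sum h4 k3 δ, cc_eq_sum h4 k4 δ]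
  rw [Finset.sum_congr rfl (fun i _ => show
      (k1 i + k2 i - k3 i + k4 i) *
        (starRingEnd ℂ) (k1 (i - δ) + k2 (i - δ) - k3 (i - δ) + k4 (i - δ)) =
          k1 i * (starRingEnd ℂ) (k1 (i - δ))
          + k1 i * (starRingEnd ℂ) (k2 (i - δ))
          - k1 i * (starRingEnd ℂ) (k3 (i - δ))
          + k1 i * (starRingEnd ℂ) (k4 (i - δ))
          + k2 i * (starRingEnd ℂ) (k1 (i - δ))
          + k2 i * (starRingEnd ℂ) (k2 (i - δ))
          - k2 i * (starRingEnd ℂ) (k3 (i - δ))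
          + k2 i * (starRingEnd ℂ) (k4 (i - δ))
          - k3 i * (starRingEnd ℂ) (k1 (i - δ))
          - k3 i * (starRingEnd ℂ) (k2 (i - δ))
          + k3 i * (starRingEnd ℂ) (k3 (i - δ))
          - k3 i * (starRingEnd ℂ) (k4 (i - δ))
          + k4 i * (starRingEnd ℂ) (k1 (i - δ))
          + k4 i * (starRingEnd ℂ) (k2 (i - δ))
          - k4 i * (starRingEnd ℂ) (k3 (i - δ))
          + k4 i * (starRingEnd ℂ) (k4 (i - δ))
      from by simp only [map_add, map_sub, map_neg]; ring)]
  simp only [Finset.sum_add_distrib, Finset.sum_sub_distrib]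

lemma pat3 (B : Finset (Fin r → ℤ)) (k1 k2 k3 k4 : Arr r)
    (h1 : ∀ i ∉ B, k1 i = 0) (h2 : ∀ i ∉ B, k2 i = 0)
    (h3 : ∀ i ∉ B, k3 i = 0) (h4 : ∀ i ∉ B, k4 i = 0) (δ : Fin r → ℤ) :
    cc (fun v => - k1 v - k2 v + k3 v - k4 v) (fun v => - k1 v - k2 v + k3 v - k4 v) δ =
      cc k1 k1 δ
      + cc k1 k2 δ
      - cc k1 k3 δ
      + cc k1 k4 δ
      + cc k2 k1 δ
      + cc k2 k2 δ
      - cc k2 k3 δ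
      + cc k2 k4 δ
      - cc k3 k1 δ
      - cc k3 k2 δ
      + cc k3 k3 δ
      - cc k3 k4 δ
      + cc k4 k1 δ
      + cc k4 k2 δ
      - cc k4 k3 δ
      + cc k4 k4 δ := by
  have hsum : ∀ i ∉ B, - k1 i - k2 i + k3 i - k4 i = 0 := by
    intro i hi; rw [h1 i hi, h2 i hi, h3 i hi, h4 i hi]; ring
  rw [cc_eq_sum hsum _ δ, cc_eq_sum h1 k1 δ, cc_eq_sum h1 k2 δ, cc_eq_sum h1 k3 δ, cc_eq_sum h1 k4 δ, cc_eq_sum h2 k1 δ, cc_eq_sum h2 k2 δ, cc_eq_sum h2 k3 δ, cc_eq_sum h2 k4 δ, cc_eq_sum h3 k1 δ, cc_eq_sum h3 k2 δ, cc_eq_sum h3 k3 δ, cc_eq_sum h3 k4 δ, cc_eq_sum h4 k1 δ, cc_eq_sum h4 k2 δ, cc_eq_sum h4 k3 δ, cc_eq_sum h4 k4 δ]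
  rw [Finset.sum_congr rfl (fun i _ => show
      (- k1 i - k2 i + k3 i - k4 i) *
        (starRingEnd ℂ) (- k1 (i - δ) - k2 (i - δ) + k3 (i - δ) - k4 (i - δ)) =
          k1 i * (starRingEnd ℂ) (k1 (i - δ))
          + k1 i * (starRingEnd ℂ) (k2 (i - δ))
          - k1 i * (starRingEnd ℂ) (k3 (i - δ))
          + k1 i * (starRingEnd ℂ) (k4 (i - δ))
          + k2 i * (starRingEnd ℂ) (k1 (i - δ))
          + k2 i * (starRingEnd ℂ) (k2 (i - δ))
          - k2 i * (starRingEnd ℂ) (k3 (i - δ))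
          + k2 i * (starRingEnd ℂ) (k4 (i - δ))
          - k3 i * (starRingEnd ℂ) (k1 (i - δ))
          - k3 i * (starRingEnd ℂ) (k2 (i - δ))
          + k3 i * (starRingEnd ℂ) (k3 (i - δ))
          - k3 i * (starRingEnd ℂ) (k4 (i - δ))
          + k4 i * (starRingEnd ℂ) (k1 (i - δ))
          + k4 i * (starRingEnd ℂ) (k2 (i - δ))
          - k4 i * (starRingEnd ℂ) (k3 (i - δ))
          + k4 i * (starRingEnd ℂ) (k4 (i - δ))
      from by simp only [map_add, map_sub, map_neg]; ring)]
  simp only [Finset.sum_add_distrib, Finset.sum_sub_distrib]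
lemma autocorr_zero {X : Arr r} (h : ∀ v, X v = 0) (δ : Fin r → ℤ) :
    autocorr X δ = 0 := autocorr_zero' h δ

lemma weight_zero {X : Arr r} (h : ∀ v, X v = 0) : weight X = 0 := weight_zero' h

end Stmt15

/-- if R_A+R_B+R_C+R_D = W₁·Δ (arrays of size m) and
R_E+R_F+R_G+R_H = W₂·Δ (arrays of size n), then for
P = A⊗F* − B*⊗E + C⊗G + D⊗H, Q = A*⊗E + B⊗F* − C⊗H* + D⊗G*,
Rr = C*⊗E − D⊗F + A⊗H* + B⊗G, S = −C⊗F − D*⊗E + A⊗G* − B⊗H,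
one has R_P + R_Q + R_Rr + R_S = W₁·W₂·Δ. -/
theorem stmt15 {r : ℕ} (m n : Fin r → ℕ) (A B C D E F G H : Arr r)
    (hA : SupportedOn m A) (hB : SupportedOn m B)
    (hC : SupportedOn m C) (hD : SupportedOn m D)
    (hE : SupportedOn n E) (hF : SupportedOn n F)
    (hG : SupportedOn n G) (hH : SupportedOn n H)
    (h1 : ComplementaryQuad A B C D)
    (h2 : ComplementaryQuad E F G H)
    (P Q Rr S : Arr r)
    (hP : P = fun v => kron n A (flipConj n F) v - kron n (flipConj m B) E v +
      kron n C G v + kron n D H v)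
    (hQ : Q = fun v => kron n (flipConj m A) E v + kron n B (flipConj n F) v -
      kron n C (flipConj n H) v + kron n D (flipConj n G) v)
    (hR : Rr = fun v => kron n (flipConj m C) E v - kron n D F v +
      kron n A (flipConj n H) v + kron n B G v)
    (hS : S = fun v => -kron n C F v - kron n (flipConj m D) E v +
      kron n A (flipConj n G) v - kron n B H v) :
    ∀ δ : Fin r → ℤ,
      autocorr P δ + autocorr Q δ + autocorr Rr δ + autocorr S δ =
        if δ = 0 then
          (((weight A + weight B + weight C + weight D) *
            (weight E + weight F + weight G + weight H) : ℝ) : ℂ)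
        else 0 := by
  intro δ
  by_cases hm : ∀ k, 0 < m k
  · by_cases hn : ∀ k, 0 < n k
    · -- main case
      have sAf := Stmt15.flipConj_suppOn hA
      have sBf := Stmt15.flipConj_suppOn hB
      have sCf := Stmt15.flipConj_suppOn hC
      have sDf := Stmt15.flipConj_suppOn hD
      have sFf := Stmt15.flipConj_suppOn hF
      have sGf := Stmt15.flipConj_suppOn hG
      have sHf := Stmt15.flipConj_suppOn hH
      have eP : autocorr P δ =
          Stmt15.cc (kron n A (flipConj n F)) (kron n A (flipConj n F)) δ
          - Stmt15.cc (kron n A (flipConj n F)) (kron n (flipConj m B) E) δ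
          + Stmt15.cc (kron n A (flipConj n F)) (kron n C G) δ
          + Stmt15.cc (kron n A (flipConj n F)) (kron n D H) δ
          - Stmt15.cc (kron n (flipConj m B) E) (kron n A (flipConj n F)) δ
          + Stmt15.cc (kron n (flipConj m B) E) (kron n (flipConj m B) E) δ
          - Stmt15.cc (kron n (flipConj m B) E) (kron n C G) δ
          - Stmt15.cc (kron n (flipConj m B) E) (kron n D H) δ
          + Stmt15.cc (kron n C G) (kron n A (flipConj n F)) δ
          - Stmt15.cc (kron n C G) (kron n (flipConj m B) E) δ
          + Stmt15.cc (kron n C G) (kron n C G) δ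
          + Stmt15.cc (kron n C G) (kron n D H) δ
          + Stmt15.cc (kron n D H) (kron n A (flipConj n F)) δ
          - Stmt15.cc (kron n D H) (kron n (flipConj m B) E) δ
          + Stmt15.cc (kron n D H) (kron n C G) δ
          + Stmt15.cc (kron n D H) (kron n D H) δ := by
        rw [hP, Stmt15.autocorr_eq_cc]
        exact Stmt15.pat1 (Stmt15.boxF fun k => m k * n k) _ _ _ _
          (Stmt15.kron_supported hn hA sFf) (Stmt15.kron_supported hn sBf hE) (Stmt15.kron_supported hn hC hG) (Stmt15.kron_supported hn hD hH) δ
      have eQ : autocorr Q δ =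
          Stmt15.cc (kron n (flipConj m A) E) (kron n (flipConj m A) E) δ
          + Stmt15.cc (kron n (flipConj m A) E) (kron n B (flipConj n F)) δ
          - Stmt15.cc (kron n (flipConj m A) E) (kron n C (flipConj n H)) δ
          + Stmt15.cc (kron n (flipConj m A) E) (kron n D (flipConj n G)) δ
          + Stmt15.cc (kron n B (flipConj n F)) (kron n (flipConj m A) E) δ
          + Stmt15.cc (kron n B (flipConj n F)) (kron n B (flipConj n F)) δ
          - Stmt15.cc (kron n B (flipConj n F)) (kron n C (flipConj n H)) δ
          + Stmt15.cc (kron n B (flipConj n F)) (kron n D (flipConj n G)) δ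
          - Stmt15.cc (kron n C (flipConj n H)) (kron n (flipConj m A) E) δ
          - Stmt15.cc (kron n C (flipConj n H)) (kron n B (flipConj n F)) δ
          + Stmt15.cc (kron n C (flipConj n H)) (kron n C (flipConj n H)) δ
          - Stmt15.cc (kron n C (flipConj n H)) (kron n D (flipConj n G)) δ
          + Stmt15.cc (kron n D (flipConj n G)) (kron n (flipConj m A) E) δ
          + Stmt15.cc (kron n D (flipConj n G)) (kron n B (flipConj n F)) δ
          - Stmt15.cc (kron n D (flipConj n G)) (kron n C (flipConj n H)) δ
          + Stmt15.cc (kron n D (flipConj n G)) (kron n D (flipConj n G)) δ := by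
        rw [hQ, Stmt15.autocorr_eq_cc]
        exact Stmt15.pat2 (Stmt15.boxF fun k => m k * n k) _ _ _ _
          (Stmt15.kron_supported hn sAf hE) (Stmt15.kron_supported hn hB sFf) (Stmt15.kron_supported hn hC sHf) (Stmt15.kron_supported hn hD sGf) δ
      have eR : autocorr Rr δ =
          Stmt15.cc (kron n (flipConj m C) E) (kron n (flipConj m C) E) δ
          - Stmt15.cc (kron n (flipConj m C) E) (kron n D F) δ
          + Stmt15.cc (kron n (flipConj m C) E) (kron n A (flipConj n H)) δ
          + Stmt15.cc (kron n (flipConj m C) E) (kron n B G) δ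
          - Stmt15.cc (kron n D F) (kron n (flipConj m C) E) δ
          + Stmt15.cc (kron n D F) (kron n D F) δ
          - Stmt15.cc (kron n D F) (kron n A (flipConj n H)) δ
          - Stmt15.cc (kron n D F) (kron n B G) δ
          + Stmt15.cc (kron n A (flipConj n H)) (kron n (flipConj m C) E) δ
          - Stmt15.cc (kron n A (flipConj n H)) (kron n D F) δ
          + Stmt15.cc (kron n A (flipConj n H)) (kron n A (flipConj n H)) δ
          + Stmt15.cc (kron n A (flipConj n H)) (kron n B G) δ
          + Stmt15.cc (kron n B G) (kron n (flipConj m C) E) δ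
          - Stmt15.cc (kron n B G) (kron n D F) δ
          + Stmt15.cc (kron n B G) (kron n A (flipConj n H)) δ
          + Stmt15.cc (kron n B G) (kron n B G) δ := by
        rw [hR, Stmt15.autocorr_eq_cc]
        exact Stmt15.pat1 (Stmt15.boxF fun k => m k * n k) _ _ _ _
          (Stmt15.kron_supported hn sCf hE) (Stmt15.kron_supported hn hD hF) (Stmt15.kron_supported hn hA sHf) (Stmt15.kron_supported hn hB hG) δ
      have eS : autocorr S δ =
          Stmt15.cc (kron n C F) (kron n C F) δ
          + Stmt15.cc (kron n C F) (kron n (flipConj m D) E) δ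
          - Stmt15.cc (kron n C F) (kron n A (flipConj n G)) δ
          + Stmt15.cc (kron n C F) (kron n B H) δ
          + Stmt15.cc (kron n (flipConj m D) E) (kron n C F) δ
          + Stmt15.cc (kron n (flipConj m D) E) (kron n (flipConj m D) E) δ
          - Stmt15.cc (kron n (flipConj m D) E) (kron n A (flipConj n G)) δ
          + Stmt15.cc (kron n (flipConj m D) E) (kron n B H) δ
          - Stmt15.cc (kron n A (flipConj n G)) (kron n C F) δ
          - Stmt15.cc (kron n A (flipConj n G)) (kron n (flipConj m D) E) δ
          + Stmt15.cc (kron n A (flipConj n G)) (kron n A (flipConj n G)) δ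
          - Stmt15.cc (kron n A (flipConj n G)) (kron n B H) δ
          + Stmt15.cc (kron n B H) (kron n C F) δ
          + Stmt15.cc (kron n B H) (kron n (flipConj m D) E) δ
          - Stmt15.cc (kron n B H) (kron n A (flipConj n G)) δ
          + Stmt15.cc (kron n B H) (kron n B H) δ := by
        rw [hS, Stmt15.autocorr_eq_cc]
        exact Stmt15.pat3 (Stmt15.boxF fun k => m k * n k) _ _ _ _
          (Stmt15.kron_supported hn hC hF) (Stmt15.kron_supported hn sDf hE) (Stmt15.kron_supported hn hA sGf) (Stmt15.kron_supported hn hB hH) δ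
      rw [eP, eQ, eR, eS]
      rw [Stmt15.key hn hA hA sFf sFf δ,
        Stmt15.key hn hA sBf sFf hE δ,
        Stmt15.key hn hA hC sFf hG δ,
        Stmt15.key hn hA hD sFf hH δ,
        Stmt15.key hn sBf hA hE sFf δ,
        Stmt15.key hn sBf sBf hE hE δ,
        Stmt15.key hn sBf hC hE hG δ,
        Stmt15.key hn sBf hD hE hH δ,
        Stmt15.key hn hC hA hG sFf δ,
        Stmt15.key hn hC sBf hG hE δ,
        Stmt15.key hn hC hC hG hG δ,
        Stmt15.key hn hC hD hG hH δ,
        Stmt15.key hn hD hA hH sFf δ,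
        Stmt15.key hn hD sBf hH hE δ,
        Stmt15.key hn hD hC hH hG δ,
        Stmt15.key hn hD hD hH hH δ,
        Stmt15.key hn sAf sAf hE hE δ,
        Stmt15.key hn sAf hB hE sFf δ,
        Stmt15.key hn sAf hC hE sHf δ,
        Stmt15.key hn sAf hD hE sGf δ,
        Stmt15.key hn hB sAf sFf hE δ,
        Stmt15.key hn hB hB sFf sFf δ,
        Stmt15.key hn hB hC sFf sHf δ,
        Stmt15.key hn hB hD sFf sGf δ,
        Stmt15.key hn hC sAf sHf hE δ,
        Stmt15.key hn hC hB sHf sFf δ,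
        Stmt15.key hn hC hC sHf sHf δ,
        Stmt15.key hn hC hD sHf sGf δ,
        Stmt15.key hn hD sAf sGf hE δ,
        Stmt15.key hn hD hB sGf sFf δ,
        Stmt15.key hn hD hC sGf sHf δ,
        Stmt15.key hn hD hD sGf sGf δ,
        Stmt15.key hn sCf sCf hE hE δ,
        Stmt15.key hn sCf hD hE hF δ,
        Stmt15.key hn sCf hA hE sHf δ,
        Stmt15.key hn sCf hB hE hG δ,
        Stmt15.key hn hD sCf hF hE δ,
        Stmt15.key hn hD hD hF hF δ,
        Stmt15.key hn hD hA hF sHf δ,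
        Stmt15.key hn hD hB hF hG δ,
        Stmt15.key hn hA sCf sHf hE δ,
        Stmt15.key hn hA hD sHf hF δ,
        Stmt15.key hn hA hA sHf sHf δ,
        Stmt15.key hn hA hB sHf hG δ,
        Stmt15.key hn hB sCf hG hE δ,
        Stmt15.key hn hB hD hG hF δ,
        Stmt15.key hn hB hA hG sHf δ,
        Stmt15.key hn hB hB hG hG δ,
        Stmt15.key hn hC hC hF hF δ,
        Stmt15.key hn hC sDf hF hE δ,
        Stmt15.key hn hC hA hF sGf δ,
        Stmt15.key hn hC hB hF hH δ,
        Stmt15.key hn sDf hC hE hF δ,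
        Stmt15.key hn sDf sDf hE hE δ,
        Stmt15.key hn sDf hA hE sGf δ,
        Stmt15.key hn sDf hB hE hH δ,
        Stmt15.key hn hA hC sGf hF δ,
        Stmt15.key hn hA sDf sGf hE δ,
        Stmt15.key hn hA hA sGf sGf δ,
        Stmt15.key hn hA hB sGf hH δ,
        Stmt15.key hn hB hC hH hF δ,
        Stmt15.key hn hB sDf hH hE δ,
        Stmt15.key hn hB hA hH sGf δ,
        Stmt15.key hn hB hB hH hH δ]
      simp only [← Finset.sum_add_distrib, ← Finset.sum_sub_distrib]
      have hc : (((weight A + weight B + weight C + weight D) *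
            (weight E + weight F + weight G + weight H) : ℝ) : ℂ)
          = ((weight A + weight B + weight C + weight D : ℝ) : ℂ) *
            ((weight E + weight F + weight G + weight H : ℝ) : ℂ) := by
        push_cast
        ring
      rw [hc, ← Stmt15.final_sum (n := n) hm
        ((weight A + weight B + weight C + weight D : ℝ) : ℂ)
        ((weight E + weight F + weight G + weight H : ℝ) : ℂ) δ]
      apply Finset.sum_congr rfl
      intro ρ _
      set σ : Fin r → ℤ := fun k => δ k - (n k : ℤ) * ρ k with hσ
      rw [← h1 ρ, ← h2 σ]
      simp only [Stmt15.autocorr_eq_cc]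
      linear_combination Stmt15.cc A A ρ * Stmt15.cc_flip_flip n F F σ
        + Stmt15.cc E E σ * Stmt15.cc_flip_flip m B B ρ
        + Stmt15.cc E E σ * Stmt15.cc_flip_flip m A A ρ
        + Stmt15.cc B B ρ * Stmt15.cc_flip_flip n F F σ
        + Stmt15.cc C C ρ * Stmt15.cc_flip_flip n H H σ
        + Stmt15.cc D D ρ * Stmt15.cc_flip_flip n G G σ
        + Stmt15.cc E E σ * Stmt15.cc_flip_flip m C C ρ
        + Stmt15.cc A A ρ * Stmt15.cc_flip_flip n H H σ
        + Stmt15.cc E E σ * Stmt15.cc_flip_flip m D D ρ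
        + Stmt15.cc A A ρ * Stmt15.cc_flip_flip n G G σ
        - Stmt15.cc (flipConj n F) E σ * Stmt15.cc_flip_right m A B ρ
        + Stmt15.cc E (flipConj n F) σ * Stmt15.cc_flip_left m A B ρ
        - Stmt15.cc A C ρ * Stmt15.cc_flip_left n G F σ
        - Stmt15.cc C A ρ * Stmt15.cc_flip_right n F G σ
        - Stmt15.cc A D ρ * Stmt15.cc_flip_left n H F σ
        - Stmt15.cc D A ρ * Stmt15.cc_flip_right n F H σ
        + Stmt15.cc E G σ * Stmt15.cc_flip_left m C B ρ
        + Stmt15.cc G E σ * Stmt15.cc_flip_right m B C ρ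
        + Stmt15.cc E H σ * Stmt15.cc_flip_left m D B ρ
        + Stmt15.cc H E σ * Stmt15.cc_flip_right m B D ρ
        - Stmt15.cc C D ρ * Stmt15.cc_flip_flip n H G σ
        - Stmt15.cc D C ρ * Stmt15.cc_flip_flip n G H σ
        - Stmt15.cc E (flipConj n H) σ * Stmt15.cc_flip_left m A C ρ
        + Stmt15.cc (flipConj n H) E σ * Stmt15.cc_flip_right m A C ρ
        + Stmt15.cc E (flipConj n G) σ * Stmt15.cc_flip_left m A D ρ
        - Stmt15.cc (flipConj n G) E σ * Stmt15.cc_flip_right m A D ρ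
        - Stmt15.cc B C ρ * Stmt15.cc_flip_flip n F H σ
        - Stmt15.cc C B ρ * Stmt15.cc_flip_flip n H F σ
        + Stmt15.cc B D ρ * Stmt15.cc_flip_flip n F G σ
        + Stmt15.cc D B ρ * Stmt15.cc_flip_flip n G F σ
        - Stmt15.cc E F σ * Stmt15.cc_flip_left m C D ρ
        + Stmt15.cc F E σ * Stmt15.cc_flip_right m C D ρ
        + Stmt15.cc A B ρ * Stmt15.cc_flip_left n H G σ
        - Stmt15.cc B A ρ * Stmt15.cc_flip_right n H G σ
    · -- n degenerate
      have hE0 := Stmt15.supp_empty hn hE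
      have hF0 := Stmt15.supp_empty hn hF
      have hG0 := Stmt15.supp_empty hn hG
      have hH0 := Stmt15.supp_empty hn hH
      have hP0 : ∀ v, P v = 0 := by
        intro v; simp [hP, kron, flipConj, hE0, hF0, hG0, hH0]
      have hQ0 : ∀ v, Q v = 0 := by
        intro v; simp [hQ, kron, flipConj, hE0, hF0, hG0, hH0]
      have hR0 : ∀ v, Rr v = 0 := by
        intro v; simp [hR, kron, flipConj, hE0, hF0, hG0, hH0]
      have hS0 : ∀ v, S v = 0 := by
        intro v; simp [hS, kron, flipConj, hE0, hF0, hG0, hH0]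
      rw [Stmt15.autocorr_zero hP0 δ, Stmt15.autocorr_zero hQ0 δ,
        Stmt15.autocorr_zero hR0 δ, Stmt15.autocorr_zero hS0 δ,
        Stmt15.weight_zero hE0, Stmt15.weight_zero hF0,
        Stmt15.weight_zero hG0, Stmt15.weight_zero hH0]
      simp
  · -- m degenerate
    have hA0 := Stmt15.supp_empty hm hA
    have hB0 := Stmt15.supp_empty hm hB
    have hC0 := Stmt15.supp_empty hm hC
    have hD0 := Stmt15.supp_empty hm hD
    have hP0 : ∀ v, P v = 0 := by
      intro v; simp [hP, kron, flipConj, hA0, hB0, hC0, hD0]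
    have hQ0 : ∀ v, Q v = 0 := by
      intro v; simp [hQ, kron, flipConj, hA0, hB0, hC0, hD0]
    have hR0 : ∀ v, Rr v = 0 := by
      intro v; simp [hR, kron, flipConj, hA0, hB0, hC0, hD0]
    have hS0 : ∀ v, S v = 0 := by
      intro v; simp [hS, kron, flipConj, hA0, hB0, hC0, hD0]
    rw [Stmt15.autocorr_zero hP0 δ, Stmt15.autocorr_zero hQ0 δ,
      Stmt15.autocorr_zero hR0 δ, Stmt15.autocorr_zero hS0 δ,
      Stmt15.weight_zero hA0, Stmt15.weight_zero hB0,
      Stmt15.weight_zero hC0, Stmt15.weight_zero hD0]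
    simp
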